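/- Let K be a field of characteristic 2 and let G be the group with presentation ⟨w_n (n ∈ ℤ) | w_n² = w_0² for all n ∈ ℤ⟩, with the ℤ-action t·w_n = w_{n+1}. Then H_1(G; K) = G^{ab} ⊗ K is a free K[t^{±1}]-module of rank 1 as a module over the group ring K[t^{±1}] of the acting group ℤ. If instead char K ≠ 2, then H_1(G; K) ≅ K[t^{±1}]/(t−1). -/

import Mathlib

open LaurentPolynomial Finsupp

noncomputable section
namespace Stmt14Aux

variable (K : Type*) [Field K]

local notation "R" => LaurentPolynomial K

def S : Submodule R (ℤ →₀ R) :=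
  Submodule.span R
    ({y | ∃ n : ℤ, y = (T 1 : R) • Finsupp.single n (1 : R) - Finsupp.single (n + 1) 1} ∪
     {y | ∃ n : ℤ, y = (2 : R) • (Finsupp.single n (1 : R) - Finsupp.single 0 1)})

lemma gen1_mem (n : ℤ) :
    (T 1 : R) • Finsupp.single n (1 : R) - Finsupp.single (n + 1) 1 ∈ S K :=
  Submodule.subset_span (Or.inl ⟨n, rfl⟩)

lemma gen2_mem (n : ℤ) :
    (2 : R) • (Finsupp.single n (1 : R) - Finsupp.single 0 1) ∈ S K :=
  Submodule.subset_span (Or.inr ⟨n, rfl⟩)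

lemma key_mem (n : ℤ) :
    (T n : R) • Finsupp.single 0 (1 : R) - Finsupp.single n 1 ∈ S K := by
  induction n using Int.induction_on with
  | zero => simp
  | succ n ih =>
    have h1 := gen1_mem K (n : ℤ)
    have hb : (T ((n:ℤ)+1) : R) = T 1 * T (n:ℤ) := by rw [← T_add, add_comm]
    have heq : (T ((n:ℤ)+1) : R) • Finsupp.single 0 (1 : R) - Finsupp.single ((n:ℤ)+1) (1:R) =
        (T 1 : R) • ((T (n:ℤ) : R) • Finsupp.single 0 (1:R) - Finsupp.single (n:ℤ) (1:R)) +
        ((T 1 : R) • Finsupp.single (n:ℤ) (1:R) - Finsupp.single ((n:ℤ)+1) (1:R)) := by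
      rw [smul_sub, smul_smul, hb]; abel
    rw [heq]
    exact add_mem (Submodule.smul_mem _ _ ih) h1
  | pred n ih =>
    have h1 : (T 1 : R) • Finsupp.single (-(n:ℤ)-1) (1:R) - Finsupp.single (-(n:ℤ)) (1:R) ∈ S K := by
      have := gen1_mem K (-(n:ℤ)-1)
      simpa using this
    have hb : (T (-(n:ℤ)-1) : R) = T (-1) * T (-(n:ℤ)) := by
      rw [show (-(n:ℤ)-1) = (-1) + (-(n:ℤ)) by ring, T_add]
    have ha : (T (-1) : R) * T 1 = 1 := by
      rw [← T_add]; norm_num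
    have heq : (T (-(n:ℤ)-1) : R) • Finsupp.single 0 (1 : R) - Finsupp.single (-(n:ℤ)-1) (1:R) =
        (T (-1) : R) • ((T (-(n:ℤ)) : R) • Finsupp.single 0 (1:R) - Finsupp.single (-(n:ℤ)) (1:R)) -
        (T (-1) : R) • ((T 1 : R) • Finsupp.single (-(n:ℤ)-1) (1:R) - Finsupp.single (-(n:ℤ)) (1:R)) := by
      rw [smul_sub, smul_sub, smul_smul, smul_smul, hb, ha, one_smul]; abel
    rw [heq]
    exact sub_mem (Submodule.smul_mem _ _ ih) (Submodule.smul_mem _ _ h1)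

lemma T_sub_one_mem (n : ℤ) :
    (T n : R) - 1 ∈ (Ideal.span {(T 1 : R) - 1} : Ideal R) := by
  induction n using Int.induction_on with
  | zero => simp
  | succ n ih =>
    have hb : (T ((n:ℤ)+1) : R) = T 1 * T (n:ℤ) := by rw [← T_add, add_comm]
    have heq : (T ((n:ℤ)+1) : R) - 1 =
        (T 1 : R) * ((T (n:ℤ) : R) - 1) + ((T 1 : R) - 1) := by rw [hb]; ring
    rw [heq]
    exact add_mem (Ideal.mul_mem_left _ _ ih) (Ideal.subset_span rfl)
  | pred n ih =>
    have hb : (T (-(n:ℤ)-1) : R) = T (-1) * T (-(n:ℤ)) := by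
      rw [show (-(n:ℤ)-1) = (-1) + (-(n:ℤ)) by ring, T_add]
    have ha : (T (-1) : R) * T 1 = 1 := by rw [← T_add]; norm_num
    have heq : (T (-(n:ℤ)-1) : R) - 1 =
        (T (-1) : R) * ((T (-(n:ℤ)) : R) - 1) - (T (-1) : R) * ((T 1 : R) - 1) := by
      rw [hb, mul_sub, mul_sub, ha]; ring
    rw [heq]
    exact sub_mem (Ideal.mul_mem_left _ _ ih) (Ideal.mul_mem_left _ _ (Ideal.subset_span rfl))

def φ : (ℤ →₀ R) →ₗ[R] R := Finsupp.linearCombination R (fun n : ℤ => (T n : R))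

lemma φ_single (n : ℤ) (c : R) : φ K (Finsupp.single n c) = c * T n := by
  unfold φ
  rw [Finsupp.linearCombination_single, smul_eq_mul]

lemma φ_gen1 (n : ℤ) :
    φ K ((T 1 : R) • Finsupp.single n (1 : R) - Finsupp.single (n + 1) 1) = 0 := by
  rw [map_sub, map_smul, φ_single, φ_single, smul_eq_mul, one_mul, one_mul, ← T_add,
    add_comm, sub_self]

lemma mk_eq (n : ℤ) (b : R) :
    (Submodule.Quotient.mk ((b * T n) • Finsupp.single 0 (1:R)) : (ℤ →₀ R) ⧸ S K) =
      Submodule.Quotient.mk (Finsupp.single n b) := by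
  rw [Submodule.Quotient.eq]
  have h := (S K).smul_mem b (key_mem K n)
  simp only [smul_sub, smul_smul, Finsupp.smul_single, smul_eq_mul, mul_one] at h ⊢
  exact h

-- char 2 case
lemma char2_ker (h2 : (2 : R) = 0) : S K ≤ LinearMap.ker (φ K) := by
  rw [S, Submodule.span_le]
  rintro y (⟨n, rfl⟩ | ⟨n, rfl⟩)
  · exact φ_gen1 K n
  · simp only [SetLike.mem_coe, LinearMap.mem_ker, h2, zero_smul, map_zero]

def e2 (h2 : (2 : R) = 0) :
    ((ℤ →₀ R) ⧸ S K) ≃ₗ[R] R := by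
  refine LinearEquiv.ofLinear ((S K).liftQ (φ K) (char2_ker K h2))
    ((S K).mkQ.comp (LinearMap.toSpanSingleton R _ (Finsupp.single 0 1))) ?_ ?_
  · apply LinearMap.ext_ring
    simp only [LinearMap.comp_apply, LinearMap.toSpanSingleton_apply, one_smul,
      Submodule.mkQ_apply, Submodule.liftQ_apply, φ_single, one_mul, T_zero,
      LinearMap.id_apply]
  · apply Submodule.linearMap_qext
    apply Finsupp.lhom_ext
    intro n b
    simp only [LinearMap.comp_apply, Submodule.mkQ_apply, Submodule.liftQ_apply, φ_single,
      LinearMap.toSpanSingleton_apply, LinearMap.id_apply]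
    exact mk_eq K n b

-- char ≠ 2 case
local notation "I" => (Ideal.span {(T 1 : R) - 1} : Ideal R)

def ψ : (ℤ →₀ R) →ₗ[R] (R ⧸ I) := (Algebra.linearMap R (R ⧸ I)).comp (φ K)

lemma ψ_single (n : ℤ) (c : R) :
    ψ K (Finsupp.single n c) = Ideal.Quotient.mk I (c * T n) := by
  rw [ψ, LinearMap.comp_apply, φ_single]
  rfl

lemma charne2_ker : S K ≤ LinearMap.ker (ψ K) := by
  rw [S, Submodule.span_le]
  rintro y (⟨n, rfl⟩ | ⟨n, rfl⟩)
  · show ψ K _ = 0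
    rw [ψ, LinearMap.comp_apply, φ_gen1, map_zero]
  · show ψ K _ = 0
    rw [map_smul, map_sub, ψ_single, ψ_single, one_mul, one_mul, T_zero, ← map_sub,
      ← Ideal.Quotient.mk_eq_mk, ← Submodule.Quotient.mk_smul,
      Submodule.Quotient.mk_eq_zero]
    exact Submodule.smul_mem _ _ (T_sub_one_mem K n)

lemma single_sub_single_mem (h2 : (2 : K) ≠ 0) (n : ℤ) :
    Finsupp.single n (1:R) - Finsupp.single 0 (1:R) ∈ S K := by
  have h := (S K).smul_mem (C (2⁻¹ : K)) (gen2_mem K n)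
  have h2R : (C (2⁻¹ : K) : R) • ((2:R) • (Finsupp.single n (1:R) - Finsupp.single 0 1)) =
      Finsupp.single n (1:R) - Finsupp.single 0 1 := by
    rw [smul_smul]
    have hc : (C (2⁻¹ : K) : R) * 2 = 1 := by
      have h2' : (2 : R) = C (2 : K) := by
        rw [show ((2:R)) = ((2:ℕ):R) by norm_num, show ((2:K)) = ((2:ℕ):K) by norm_num,
          map_natCast C]
      rw [h2', ← map_mul, inv_mul_cancel₀ h2, map_one]
    rw [hc, one_smul]
  rwa [h2R] at h

def e3 (h2 : (2 : K) ≠ 0) :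
    ((ℤ →₀ R) ⧸ S K) ≃ₗ[R] (R ⧸ I) := by
  refine LinearEquiv.ofLinear ((S K).liftQ (ψ K) (charne2_ker K))
    (Submodule.liftQ I ((S K).mkQ.comp (LinearMap.toSpanSingleton R _ (Finsupp.single 0 1))) ?_)
    ?_ ?_
  · rw [Ideal.span_le]
    rintro y rfl
    simp only [SetLike.mem_coe, LinearMap.mem_ker, LinearMap.comp_apply,
      LinearMap.toSpanSingleton_apply, Submodule.mkQ_apply]
    rw [Submodule.Quotient.mk_eq_zero]
    have heq : ((T 1 : R) - 1) • Finsupp.single (0:ℤ) (1:R) =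
        ((T 1 : R) • Finsupp.single (0:ℤ) (1:R) - Finsupp.single ((0:ℤ)+1) (1:R)) +
        (Finsupp.single (1:ℤ) (1:R) - Finsupp.single (0:ℤ) (1:R)) := by
      rw [sub_smul, one_smul]
      norm_num
    rw [heq]
    exact add_mem (gen1_mem K 0) (single_sub_single_mem K h2 1)
  · apply Submodule.linearMap_qext
    apply LinearMap.ext_ring
    simp only [LinearMap.comp_apply, Submodule.mkQ_apply, Submodule.liftQ_apply,
      LinearMap.toSpanSingleton_apply, one_smul, ψ_single, one_mul, T_zero,
      LinearMap.id_apply, ← Ideal.Quotient.mk_eq_mk, map_one]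
    rfl
  · apply Submodule.linearMap_qext
    apply Finsupp.lhom_ext
    intro n b
    simp only [LinearMap.comp_apply, Submodule.mkQ_apply, Submodule.liftQ_apply, ψ_single,
      ← Ideal.Quotient.mk_eq_mk, LinearMap.toSpanSingleton_apply, LinearMap.id_apply]
    exact mk_eq K n b

end Stmt14Aux
end

open LaurentPolynomial

/-- Over `R = K[t^{±1}]`, let `M` be the `R`-module with generators `x_n` (`n ∈ ℤ`) and
relations `t·x_n = x_{n+1}` and `2x_n = 2x_0` (the first homology of
`G = ⟨w_n ∣ w_n² = w_0²⟩` with the shift `ℤ`-action).  If `char K = 2` then `M` is a free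
`R`-module of rank `1`; if `char K ≠ 2` then `M ≅ K[t^{±1}]/(t−1)`. -/
theorem stmt_14 (K : Type*) [Field K] :
    (ringChar K = 2 →
      Nonempty
        (((ℤ →₀ LaurentPolynomial K) ⧸
            Submodule.span (LaurentPolynomial K)
              ({y | ∃ n : ℤ, y = (T 1 : LaurentPolynomial K) • Finsupp.single n (1 : LaurentPolynomial K) -
                  Finsupp.single (n + 1) 1} ∪
               {y | ∃ n : ℤ, y = (2 : LaurentPolynomial K) •
                  (Finsupp.single n (1 : LaurentPolynomial K) - Finsupp.single 0 1)})) ≃ₗ[LaurentPolynomial K]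
          LaurentPolynomial K)) ∧
    (ringChar K ≠ 2 →
      Nonempty
        (((ℤ →₀ LaurentPolynomial K) ⧸
            Submodule.span (LaurentPolynomial K)
              ({y | ∃ n : ℤ, y = (T 1 : LaurentPolynomial K) • Finsupp.single n (1 : LaurentPolynomial K) -
                  Finsupp.single (n + 1) 1} ∪
               {y | ∃ n : ℤ, y = (2 : LaurentPolynomial K) •
                  (Finsupp.single n (1 : LaurentPolynomial K) - Finsupp.single 0 1)})) ≃ₗ[LaurentPolynomial K]
          (LaurentPolynomial K ⧸
            (Ideal.span {T 1 - 1} : Ideal (LaurentPolynomial K))))) := by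
  constructor
  · intro h
    have h2K : (2 : K) = 0 := by
      have : ((2:ℕ) : K) = 0 := (ringChar.spec K 2).mpr (by rw [h])
      simpa using this
    have h2R : (2 : LaurentPolynomial K) = 0 := by
      have : (2 : LaurentPolynomial K) = C (2 : K) := by
        rw [show ((2:LaurentPolynomial K)) = ((2:ℕ):LaurentPolynomial K) by norm_num,
          show ((2:K)) = ((2:ℕ):K) by norm_num, map_natCast C]
      rw [this, h2K, map_zero]
    exact ⟨Stmt14Aux.e2 K h2R⟩
  · intro h
    have h2K : (2 : K) ≠ 0 := by
      intro h0
      have hdvd : ringChar K ∣ 2 := (ringChar.spec K 2).mp (by simpa using h0)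
      rcases (Nat.dvd_prime Nat.prime_two).mp hdvd with h1 | h2'
      · exact CharP.ringChar_ne_one h1
      · exact h h2'
    exact ⟨Stmt14Aux.e3 K h2K⟩
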